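/- Let F_q be a finite field with q elements and let d1, d2, k be natural numbers with k < d1 and k < d2. The number of pairs (u, v) of monic polynomials over F_q with deg u = d1, deg v = d2, and whose greatest common divisor has degree exactly k equals q^{d1+d2−k} − q^{d1+d2−k−1}. -/

import Mathlib

open Polynomial

section Aux
variable {F : Type*} [Field F] [Fintype F] [DecidableEq F]

noncomputable def monicEquiv (n : ℕ) :
    {p : F[X] // p.Monic ∧ p.natDegree = n} ≃ Polynomial.degreeLT F n where
  toFun p := ⟨p.1 - X ^ n, by
    rw [Polynomial.mem_degreeLT]
    have h1 : p.1.degree = (n : WithBot ℕ) := by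
      rw [Polynomial.degree_eq_natDegree p.2.1.ne_zero, p.2.2]
    have := Polynomial.degree_sub_lt (q := (X:F[X]) ^ n)
      (by rw [h1, degree_X_pow]) p.2.1.ne_zero
      (by rw [p.2.1.leadingCoeff, (monic_X_pow n).leadingCoeff])
    rwa [h1] at this⟩
  invFun f := ⟨X ^ n + f.1, by
    have hf : f.1.degree < (n : WithBot ℕ) := (Polynomial.mem_degreeLT).mp f.2
    constructor
    · exact monic_X_pow_add hf
    · have : (X ^ n + f.1 : F[X]).degree = (n : WithBot ℕ) := by
        rw [degree_add_eq_left_of_degree_lt (by rwa [degree_X_pow]), degree_X_pow]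
      exact natDegree_eq_of_degree_eq_some this⟩
  left_inv p := by ext; ring
  right_inv f := by ext; ring

theorem card_monic (n : ℕ) :
    Nat.card {p : F[X] // p.Monic ∧ p.natDegree = n} = Fintype.card F ^ n := by
  rw [Nat.card_congr (monicEquiv n), Nat.card_congr (Polynomial.degreeLTEquiv F n).toEquiv]
  simp [Nat.card_eq_fintype_card]

instance finite_monic (n : ℕ) : Finite {p : F[X] // p.Monic ∧ p.natDegree = n} :=
  Finite.of_equiv _ ((monicEquiv n).trans (Polynomial.degreeLTEquiv F n).toEquiv).symm

/-- The set of pairs of monic polynomials with prescribed degrees and gcd degree. -/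
def S (F : Type*) [Field F] [DecidableEq F] (a b k : ℕ) : Set (F[X] × F[X]) :=
  {p : F[X] × F[X] | p.1.Monic ∧ p.2.Monic ∧ p.1.natDegree = a ∧
    p.2.natDegree = b ∧ (gcd p.1 p.2).natDegree = k}

theorem gcd_monic' {p q : F[X]} (hp : p ≠ 0) : (gcd p q).Monic := by
  have h : gcd p q ≠ 0 := by
    rw [Ne, gcd_eq_zero_iff]; exact fun h => hp h.1
  rw [← normalize_gcd]; exact monic_normalize h

theorem monic_gcd_mul {g u v : F[X]} (hg : g.Monic) :
    gcd (g * u) (g * v) = g * gcd u v := by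
  rw [gcd_mul_left, hg.normalize_eq_self]

noncomputable def fullEquiv (A B : ℕ) :
    {p : F[X] × F[X] // p.1.Monic ∧ p.2.Monic ∧ p.1.natDegree = A ∧ p.2.natDegree = B} ≃
      {p : F[X] // p.Monic ∧ p.natDegree = A} × {p : F[X] // p.Monic ∧ p.natDegree = B} where
  toFun p := (⟨p.1.1, p.2.1, p.2.2.2.1⟩, ⟨p.1.2, p.2.2.1, p.2.2.2.2⟩)
  invFun x := ⟨(x.1.1, x.2.1), x.1.2.1, x.2.2.1, x.1.2.2, x.2.2.2⟩
  left_inv p := rfl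
  right_inv x := rfl

/-- The shift bijection: multiplying a coprime pair by a monic polynomial of degree `k`. -/
theorem card_S_shift (a b k : ℕ) :
    Nat.card (S F (a + k) (b + k) k) = Fintype.card F ^ k * Nat.card (S F a b 0) := by
  rw [← card_monic (F := F) k, ← Nat.card_prod]
  symm
  apply Nat.card_eq_of_bijective
    (fun x => ⟨(x.1.1 * x.2.1.1, x.1.1 * x.2.1.2), by
      obtain ⟨⟨g, hg, hgk⟩, ⟨⟨u, v⟩, hu, hv, hda, hdb, h0⟩⟩ := x
      have hguv : gcd u v = 1 := ((gcd_monic' hu.ne_zero).natDegree_eq_zero).mp h0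
      refine ⟨hg.mul hu, hg.mul hv, ?_, ?_, ?_⟩
      · rw [natDegree_mul hg.ne_zero hu.ne_zero, hgk, hda, Nat.add_comm]
      · rw [natDegree_mul hg.ne_zero hv.ne_zero, hgk, hdb, Nat.add_comm]
      · simp only
        rw [monic_gcd_mul hg, hguv, mul_one, hgk]⟩)
  constructor
  · rintro ⟨⟨g, hg, hgk⟩, ⟨⟨u, v⟩, hu, hv, hda, hdb, h0⟩⟩
      ⟨⟨g', hg', hgk'⟩, ⟨⟨u', v'⟩, hu', hv', hda', hdb', h0'⟩⟩ heq
    simp only [Subtype.mk.injEq, Prod.mk.injEq] at heq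
    obtain ⟨h1, h2⟩ := heq
    have hguv : gcd u v = 1 := ((gcd_monic' hu.ne_zero).natDegree_eq_zero).mp h0
    have hguv' : gcd u' v' = 1 := ((gcd_monic' hu'.ne_zero).natDegree_eq_zero).mp h0'
    have hgg : g = g' := by
      have e1 : gcd (g * u) (g * v) = g := by rw [monic_gcd_mul hg, hguv, mul_one]
      have e2 : gcd (g' * u') (g' * v') = g' := by rw [monic_gcd_mul hg', hguv', mul_one]
      rw [← e1, ← e2, h1, h2]
    subst hgg
    have hu2 : u = u' := mul_left_cancel₀ hg.ne_zero h1
    have hv2 : v = v' := mul_left_cancel₀ hg.ne_zero h2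
    simp [hu2, hv2]
  · rintro ⟨⟨p₁, p₂⟩, h1, h2, h3, h4, h5⟩
    set g := gcd p₁ p₂ with hgdef
    have hg : g.Monic := gcd_monic' h1.ne_zero
    obtain ⟨u, hu⟩ : g ∣ p₁ := gcd_dvd_left p₁ p₂
    obtain ⟨v, hv⟩ : g ∣ p₂ := gcd_dvd_right p₁ p₂
    have hum : u.Monic := hg.of_mul_monic_left (hu ▸ h1)
    have hvm : v.Monic := hg.of_mul_monic_left (hv ▸ h2)
    have hgdeg : g.natDegree = k := h5
    have hua : u.natDegree = a := by
      have := natDegree_mul hg.ne_zero hum.ne_zero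
      rw [← hu, h3, hgdeg] at this; omega
    have hvb : v.natDegree = b := by
      have := natDegree_mul hg.ne_zero hvm.ne_zero
      rw [← hv, h4, hgdeg] at this; omega
    have hcop : gcd u v = 1 := by
      have : g * gcd u v = g := by
        rw [← monic_gcd_mul hg, ← hu, ← hv, ← hgdef]
      have := mul_left_cancel₀ hg.ne_zero (by rw [this, mul_one] : g * gcd u v = g * 1)
      exact this
    refine ⟨⟨⟨g, hg, hgdeg⟩, ⟨⟨u, v⟩, hum, hvm, hua, hvb, by rw [hcop]; simp⟩⟩, ?_⟩
    simp [← hu, ← hv]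


instance finite_full (A B : ℕ) :
    Finite {p : F[X] × F[X] // p.1.Monic ∧ p.2.Monic ∧ p.1.natDegree = A ∧ p.2.natDegree = B} :=
  Finite.of_equiv _ (fullEquiv A B).symm

theorem card_full (A B : ℕ) :
    Nat.card {p : F[X] × F[X] // p.1.Monic ∧ p.2.Monic ∧ p.1.natDegree = A ∧ p.2.natDegree = B}
      = Fintype.card F ^ (A + B) := by
  rw [Nat.card_congr (fullEquiv A B), Nat.card_prod, card_monic, card_monic, pow_add]

theorem partition (A B : ℕ) :
    ∑ j ∈ Finset.range (min A B + 1), Nat.card (S F A B j) = Fintype.card F ^ (A + B) := by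
  set full : Set (F[X] × F[X]) :=
    {p | p.1.Monic ∧ p.2.Monic ∧ p.1.natDegree = A ∧ p.2.natDegree = B} with hfull
  have hfin : full.Finite := @Set.toFinite _ full (finite_full A B)
  have hsub : ∀ j, S F A B j ⊆ full := fun j p hp => ⟨hp.1, hp.2.1, hp.2.2.1, hp.2.2.2.1⟩
  have hSfin : ∀ j, (S F A B j).Finite := fun j => hfin.subset (hsub j)
  have key : hfin.toFinset =
      (Finset.range (min A B + 1)).biUnion (fun j => (hSfin j).toFinset) := by
    ext p
    simp only [Set.Finite.mem_toFinset, Finset.mem_biUnion, Finset.mem_range]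
    constructor
    · rintro ⟨h1, h2, h3, h4⟩
      refine ⟨(gcd p.1 p.2).natDegree, ?_, h1, h2, h3, h4, rfl⟩
      have hd1 : (gcd p.1 p.2).natDegree ≤ A :=
        h3 ▸ natDegree_le_of_dvd (gcd_dvd_left _ _) h1.ne_zero
      have hd2 : (gcd p.1 p.2).natDegree ≤ B :=
        h4 ▸ natDegree_le_of_dvd (gcd_dvd_right _ _) h2.ne_zero
      omega
    · rintro ⟨j, _, h1, h2, h3, h4, _⟩; exact ⟨h1, h2, h3, h4⟩
  have hcard : hfin.toFinset.card = ∑ j ∈ Finset.range (min A B + 1), (hSfin j).toFinset.card := by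
    rw [key]
    apply Finset.card_biUnion
    intro i _ j _ hij
    rw [Function.onFun, Finset.disjoint_left]
    intro p hpi hpj
    rw [Set.Finite.mem_toFinset] at hpi hpj
    exact hij (hpi.2.2.2.2 ▸ hpj.2.2.2.2)
  have h2 : Nat.card full = Fintype.card F ^ (A + B) := card_full A B
  have h3 : ∀ j, Nat.card (S F A B j) = (hSfin j).toFinset.card := fun j => by
    rw [Nat.card_coe_set_eq, Set.ncard_eq_toFinset_card _ (hSfin j)]
  have h4 : Nat.card full = hfin.toFinset.card := by
    rw [Nat.card_coe_set_eq, Set.ncard_eq_toFinset_card _ hfin]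
  simp only [h3]
  rw [← hcard, ← h4, h2]

theorem partition' (A B : ℕ) :
    ∑ j ∈ Finset.range (min A B + 1),
        Fintype.card F ^ j * Nat.card (S F (A - j) (B - j) 0)
      = Fintype.card F ^ (A + B) := by
  rw [← partition A B]
  apply Finset.sum_congr rfl
  intro j hj
  rw [Finset.mem_range] at hj
  have hjA : j ≤ A := by omega
  have hjB : j ≤ B := by omega
  have := card_S_shift (F := F) (A - j) (B - j) j
  rw [Nat.sub_add_cancel hjA, Nat.sub_add_cancel hjB] at this
  omega

theorem coprime_card (A B : ℕ) (hA : 1 ≤ A) (hB : 1 ≤ B) :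
    Nat.card (S F A B 0) + Fintype.card F ^ (A + B - 1) = Fintype.card F ^ (A + B) := by
  have hm : min A B = min (A - 1) (B - 1) + 1 := by omega
  have h1 := partition' (F := F) A B
  rw [Finset.sum_range_succ'] at h1
  simp only [Nat.sub_zero] at h1
  have h2 : ∀ j, Fintype.card F ^ (j + 1) * Nat.card (S F (A - (j + 1)) (B - (j + 1)) 0)
      = Fintype.card F * (Fintype.card F ^ j * Nat.card (S F (A - 1 - j) (B - 1 - j) 0)) := by
    intro j
    have e1 : A - (j + 1) = A - 1 - j := by omega
    have e2 : B - (j + 1) = B - 1 - j := by omega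
    rw [e1, e2, pow_succ]; ring
  simp only [h2] at h1
  rw [← Finset.mul_sum, hm] at h1
  rw [partition' (F := F) (A - 1) (B - 1)] at h1
  have e3 : Fintype.card F * Fintype.card F ^ (A - 1 + (B - 1)) = Fintype.card F ^ (A + B - 1) := by
    rw [← pow_succ']; congr 1; omega
  rw [e3] at h1
  simp only [pow_zero, one_mul] at h1
  omega

end Aux

/-- Over a finite field with `q` elements, for `k < d₁` and `k < d₂`, the number of pairs of
monic polynomials of degrees `d₁, d₂` whose gcd has degree exactly `k` equals
`q^(d₁+d₂−k) − q^(d₁+d₂−k−1)`. -/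
theorem count_gcd_deg_eq (F : Type*) [Field F] [Fintype F] [DecidableEq F] (q : ℕ)
    (hq : Fintype.card F = q) (d1 d2 k : ℕ) (hk1 : k < d1) (hk2 : k < d2) :
    Set.ncard {p : F[X] × F[X] | p.1.Monic ∧ p.2.Monic ∧ p.1.natDegree = d1 ∧
        p.2.natDegree = d2 ∧ (gcd p.1 p.2).natDegree = k}
      = q ^ (d1 + d2 - k) - q ^ (d1 + d2 - k - 1) := by
  subst hq
  have hset : {p : F[X] × F[X] | p.1.Monic ∧ p.2.Monic ∧ p.1.natDegree = d1 ∧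
      p.2.natDegree = d2 ∧ (gcd p.1 p.2).natDegree = k} = S F d1 d2 k := rfl
  rw [hset, ← Nat.card_coe_set_eq]
  have h1 := card_S_shift (F := F) (d1 - k) (d2 - k) k
  rw [Nat.sub_add_cancel hk1.le, Nat.sub_add_cancel hk2.le] at h1
  have h2 := coprime_card (F := F) (d1 - k) (d2 - k) (by omega) (by omega)
  have e1 : Fintype.card F ^ k * Fintype.card F ^ (d1 - k + (d2 - k))
      = Fintype.card F ^ (d1 + d2 - k) := by
    rw [← pow_add]; congr 1; omega
  have e2 : Fintype.card F ^ k * Fintype.card F ^ (d1 - k + (d2 - k) - 1)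
      = Fintype.card F ^ (d1 + d2 - k - 1) := by
    rw [← pow_add]; congr 1; omega
  have h3 : Nat.card (S F d1 d2 k) + Fintype.card F ^ (d1 + d2 - k - 1)
      = Fintype.card F ^ (d1 + d2 - k) := by
    rw [h1, ← e1, ← e2, ← Nat.mul_add, h2]
  omega
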